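/- For each 0 < ε < 1/2 and each positive integer k, every 2-edge-colored complete graph on n ≥ 2^{2k} vertices contains, in one of the two colors, a k-cylinder V_1 × ... × V_k with parts of equal size such that every pair (V_i, V_j), 1 ≤ i < j ≤ k, is ε-regular with density at least 1/2 in that color, and the size of each part is at least (1/(2·2^{2k}))·ε^{2^{4k}·ε^{−5}}·n. -/

import Mathlib

/-- The density of the pair of vertex sets `(A, B)` in the graph `G`:
`d(A,B) = e(A,B) / (|A| |B|)`. -/
noncomputable def density {V : Type*} (G : SimpleGraph V) (A B : Finset V) : ℝ :=
  ({p : V × V | p.1 ∈ A ∧ p.2 ∈ B ∧ G.Adj p.1 p.2}.ncard : ℝ) / ((A.card : ℝ) * (B.card : ℝ))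

/-- The pair `(A, B)` is `ε`-regular in `G`: for all `X ⊆ A`, `Y ⊆ B` with
`|X| > ε|A|` and `|Y| > ε|B|`, one has `|d(X,Y) - d(A,B)| < ε`. -/
def EpsRegular {V : Type*} (G : SimpleGraph V) (ε : ℝ) (A B : Finset V) : Prop :=
  ∀ X ⊆ A, ∀ Y ⊆ B, ε * (A.card : ℝ) < (X.card : ℝ) → ε * (B.card : ℝ) < (Y.card : ℝ) →
    |density G X Y - density G A B| < ε

/-- The number of neighbors of the vertex `a` inside the set `B`. -/
noncomputable def degIn {V : Type*} (G : SimpleGraph V) (a : V) (B : Finset V) : ℕ :=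
  {b : V | b ∈ B ∧ G.Adj a b}.ncard

/-- The pair `(A, B)` is `(ε, d, δ)`-super-regular in `G`: it is `ε`-regular, has
density at least `d`, every vertex of `A` has at least `δ|B|` neighbors in `B`, and
every vertex of `B` has at least `δ|A|` neighbors in `A`. -/
def SuperRegular {V : Type*} (G : SimpleGraph V) (ε d δ : ℝ) (A B : Finset V) : Prop :=
  EpsRegular G ε A B ∧ d ≤ density G A B ∧
    (∀ a ∈ A, δ * (B.card : ℝ) ≤ (degIn G a B : ℝ)) ∧
    (∀ b ∈ B, δ * (A.card : ℝ) ≤ (degIn G b A : ℝ))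

set_option linter.unusedSectionVars false
set_option linter.unusedVariables false

namespace DRC

open Finset
open scoped Classical

variable {V : Type*} [DecidableEq V]

/-- edge count between A and B -/
noncomputable def ec (G : SimpleGraph V) (A B : Finset V) : ℕ :=
  ((A ×ˢ B).filter (fun p => G.Adj p.1 p.2)).card

lemma density_eq (G : SimpleGraph V) (A B : Finset V) :
    density G A B = (ec G A B : ℝ) / ((A.card : ℝ) * (B.card : ℝ)) := by
  unfold density ec
  congr 2
  have : {p : V × V | p.1 ∈ A ∧ p.2 ∈ B ∧ G.Adj p.1 p.2}
      = ↑((A ×ˢ B).filter (fun p => G.Adj p.1 p.2)) := by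
    ext p
    simp [Finset.mem_product, and_assoc]
  rw [this, Set.ncard_coe_finset]

lemma ec_eq_sum (G : SimpleGraph V) (A B : Finset V) :
    ec G A B = ∑ a ∈ A, (B.filter (fun b => G.Adj a b)).card := by
  unfold ec
  rw [Finset.card_eq_sum_card_fiberwise (f := Prod.fst) (t := A)
    (fun p hp => (Finset.mem_product.1 (Finset.mem_filter.1 hp).1).1)]
  refine Finset.sum_congr rfl fun a ha => ?_
  apply Finset.card_bij (fun p _ => p.2)
  · intro p hp
    simp only [Finset.mem_filter, Finset.mem_product] at hp ⊢
    obtain ⟨⟨⟨h1, h2⟩, h3⟩, h4⟩ := hp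
    exact ⟨h2, h4 ▸ h3⟩
  · intro p hp q hq hpq
    simp only [Finset.mem_filter, Finset.mem_product] at hp hq
    exact Prod.ext (hp.2.trans hq.2.symm) hpq
  · intro b hb
    simp only [Finset.mem_filter] at hb
    exact ⟨(a, b), by simp [Finset.mem_filter, Finset.mem_product, hb.1, hb.2, ha], rfl⟩

lemma ec_le (G : SimpleGraph V) (A B : Finset V) : ec G A B ≤ A.card * B.card := by
  calc ec G A B ≤ (A ×ˢ B).card := Finset.card_filter_le _ _
  _ = A.card * B.card := Finset.card_product A B

lemma density_nonneg (G : SimpleGraph V) (A B : Finset V) : 0 ≤ density G A B := by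
  rw [density_eq]; positivity

lemma density_le_one (G : SimpleGraph V) (A B : Finset V) : density G A B ≤ 1 := by
  rw [density_eq]
  rcases eq_or_ne ((A.card : ℝ) * B.card) 0 with h | h
  · rw [h, div_zero]; norm_num
  · rw [div_le_one (lt_of_le_of_ne (by positivity) (Ne.symm h))]
    exact_mod_cast ec_le G A B

lemma density_comm (G : SimpleGraph V) (A B : Finset V) : density G A B = density G B A := by
  rw [density_eq, density_eq, mul_comm]
  congr 2
  apply Finset.card_bij (fun p _ => (p.2, p.1))
  · intro p hp
    simp only [Finset.mem_filter, Finset.mem_product] at hp ⊢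
    exact ⟨⟨hp.1.2, hp.1.1⟩, hp.2.symm⟩
  · intro p hp q hq h
    exact Prod.ext (congrArg Prod.snd h) (congrArg Prod.fst h)
  · intro p hp
    simp only [Finset.mem_filter, Finset.mem_product] at hp
    exact ⟨(p.2, p.1), by simp [Finset.mem_filter, Finset.mem_product, hp.1.1, hp.1.2, hp.2.symm], rfl⟩

/-- additivity in the first argument -/
lemma ec_union_left (G : SimpleGraph V) {A₁ A₂ : Finset V} (B : Finset V)
    (h : Disjoint A₁ A₂) : ec G (A₁ ∪ A₂) B = ec G A₁ B + ec G A₂ B := by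
  unfold ec
  rw [Finset.union_product, Finset.filter_union, Finset.card_union_of_disjoint]
  refine Finset.disjoint_filter_filter ?_
  refine Finset.disjoint_left.2 fun p hp hq => ?_
  simp only [Finset.mem_product] at hp hq
  exact (Finset.disjoint_left.1 h) hp.1 hq.1

lemma ec_sdiff_left (G : SimpleGraph V) {X A : Finset V} (B : Finset V) (h : X ⊆ A) :
    ec G A B = ec G X B + ec G (A \ X) B := by
  rw [← ec_union_left G B (Finset.disjoint_sdiff), Finset.union_sdiff_of_subset h]

/-- complement edge count, for disjoint sets -/
lemma ec_compl (G : SimpleGraph V) {A B : Finset V} (h : Disjoint A B) :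
    ec Gᶜ A B = A.card * B.card - ec G A B := by
  unfold ec
  have key : ((A ×ˢ B).filter (fun p => Gᶜ.Adj p.1 p.2))
      = (A ×ˢ B) \ ((A ×ˢ B).filter (fun p => G.Adj p.1 p.2)) := by
    ext p
    simp only [Finset.mem_filter, Finset.mem_sdiff, Finset.mem_product, SimpleGraph.compl_adj]
    constructor
    · rintro ⟨⟨h1, h2⟩, hne, hna⟩
      exact ⟨⟨h1, h2⟩, fun hc => hna hc.2⟩
    · rintro ⟨⟨h1, h2⟩, hna⟩
      exact ⟨⟨h1, h2⟩, fun he => (Finset.disjoint_left.1 h) h1 (he ▸ h2), fun ha => hna ⟨⟨h1, h2⟩, ha⟩⟩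
  have key2 := congrArg Finset.card key
  rw [Finset.card_sdiff_of_subset (Finset.filter_subset _ _), Finset.card_product] at key2
  convert key2 using 3

lemma density_compl (G : SimpleGraph V) {A B : Finset V} (h : Disjoint A B)
    (hA : A.Nonempty) (hB : B.Nonempty) :
    density Gᶜ A B = 1 - density G A B := by
  have hA' : (0:ℝ) < A.card := by exact_mod_cast hA.card_pos
  have hB' : (0:ℝ) < B.card := by exact_mod_cast hB.card_pos
  rw [density_eq, density_eq, ec_compl G h]
  have hle : (ec G A B : ℝ) ≤ (A.card : ℝ) * B.card := by exact_mod_cast ec_le G A B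
  rw [Nat.cast_sub (ec_le G A B), Nat.cast_mul]
  field_simp

lemma EpsRegular_compl {ε : ℝ} (hε : 0 < ε) (G : SimpleGraph V) {A B : Finset V}
    (h : Disjoint A B) (hreg : EpsRegular G ε A B) : EpsRegular Gᶜ ε A B := by
  intro X hX Y hY hXc hYc
  have hXpos : (0:ℝ) < X.card := lt_of_le_of_lt (by positivity) hXc
  have hYpos : (0:ℝ) < Y.card := lt_of_le_of_lt (by positivity) hYc
  have hXne : X.Nonempty := Finset.card_pos.1 (by exact_mod_cast hXpos)
  have hYne : Y.Nonempty := Finset.card_pos.1 (by exact_mod_cast hYpos)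
  have hAne : A.Nonempty := hXne.mono hX
  have hBne : B.Nonempty := hYne.mono hY
  have hdXY : Disjoint X Y := h.mono hX hY
  rw [density_compl G hdXY hXne hYne, density_compl G h hAne hBne]
  rw [show (1 - density G X Y) - (1 - density G A B) = -(density G X Y - density G A B) by ring,
    abs_neg]
  exact hreg X hX Y hY hXc hYc

lemma card_filter_mem_powersetCard (W : Finset V) (u : V) (hu : u ∈ W) (r : ℕ) (hr : 1 ≤ r) :
    ((W.powersetCard r).filter (fun T => u ∈ T)).card
      = ((W.erase u).powersetCard (r - 1)).card := by
  apply Finset.card_bij (fun T _ => T.erase u)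
  · intro T hT
    simp only [Finset.mem_filter, Finset.mem_powersetCard] at hT
    obtain ⟨⟨hsub, hcard⟩, hmem⟩ := hT
    simp only [Finset.mem_powersetCard]
    constructor
    · exact fun x hx => Finset.mem_erase.2 ⟨(Finset.mem_erase.1 hx).1, hsub (Finset.mem_erase.1 hx).2⟩
    · rw [Finset.card_erase_of_mem hmem, hcard]
  · intro T hT S hS hTS
    simp only [Finset.mem_filter] at hT hS
    rw [← Finset.insert_erase hT.2, ← Finset.insert_erase hS.2, hTS]
  · intro S hS
    simp only [Finset.mem_powersetCard] at hS
    refine ⟨insert u S, ?_, ?_⟩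
    · simp only [Finset.mem_filter, Finset.mem_powersetCard]
      have husS : u ∉ S := fun hc => (Finset.mem_erase.1 (hS.1 hc)).1 rfl
      refine ⟨⟨?_, ?_⟩, Finset.mem_insert_self u S⟩
      · intro x hx
        rcases Finset.mem_insert.1 hx with rfl | hx
        · exact hu
        · exact (Finset.erase_subset u W) (hS.1 hx)
      · rw [Finset.card_insert_of_notMem husS, hS.2]
        omega
    · rw [Finset.erase_insert (fun hc => (Finset.mem_erase.1 (hS.1 hc)).1 rfl)]

lemma sum_powersetCard_sum (W : Finset V) (r : ℕ) (hr : 1 ≤ r) (c : V → ℕ) :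
    ∑ T ∈ W.powersetCard r, ∑ u ∈ T, c u
      = (W.card - 1).choose (r - 1) * ∑ u ∈ W, c u := by
  have step1 : ∀ T ∈ W.powersetCard r, ∑ u ∈ T, c u = ∑ u ∈ W, if u ∈ T then c u else 0 := by
    intro T hT
    rw [Finset.sum_ite_mem, Finset.inter_eq_right.2 (Finset.mem_powersetCard.1 hT).1]
  rw [Finset.sum_congr rfl step1, Finset.sum_comm]
  have step2 : ∀ u ∈ W, (∑ T ∈ W.powersetCard r, if u ∈ T then c u else 0)
      = (W.card - 1).choose (r - 1) * c u := by
    intro u hu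
    rw [Finset.sum_ite, Finset.sum_const_zero, add_zero, Finset.sum_const, smul_eq_mul]
    congr 1
    rw [card_filter_mem_powersetCard W u hu r hr, Finset.card_powersetCard,
      Finset.card_erase_of_mem hu]
  rw [Finset.sum_congr rfl step2, ← Finset.mul_sum]


lemma nat_key (n r : ℕ) (h1 : 1 ≤ r) (h2 : r ≤ n) :
    r * n.choose r = n * ((n-1).choose (r-1)) := by
  obtain ⟨m, rfl⟩ : ∃ m, n = m + 1 := ⟨n-1, by omega⟩
  obtain ⟨s, rfl⟩ : ∃ s, r = s + 1 := ⟨r-1, by omega⟩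
  simpa [mul_comm] using (Nat.add_one_mul_choose_eq m s).symm

lemma sum_powersetCard_ec (G : SimpleGraph V) (W U : Finset V) (r : ℕ) (hr : 1 ≤ r) :
    ∑ T ∈ W.powersetCard r, ec G T U
      = (W.card - 1).choose (r - 1) * ec G W U := by
  calc ∑ T ∈ W.powersetCard r, ec G T U
      = ∑ T ∈ W.powersetCard r, ∑ u ∈ T, (U.filter (fun b => G.Adj u b)).card := by
        exact Finset.sum_congr rfl fun T _ => ec_eq_sum G T U
    _ = (W.card - 1).choose (r - 1) * ∑ u ∈ W, (U.filter (fun b => G.Adj u b)).card :=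
        sum_powersetCard_sum W r hr _
    _ = (W.card - 1).choose (r - 1) * ec G W U := by rw [← ec_eq_sum]

lemma sum_powersetCard_density (G : SimpleGraph V) (W U : Finset V) (r : ℕ)
    (hr : 1 ≤ r) (hrW : r ≤ W.card) :
    ∑ T ∈ W.powersetCard r, density G T U
      = (W.card.choose r : ℝ) * density G W U := by
  have hcardT : ∀ T ∈ W.powersetCard r, density G T U = (ec G T U : ℝ) / ((r : ℝ) * U.card) := by
    intro T hT
    rw [density_eq, (Finset.mem_powersetCard.1 hT).2]
  rw [Finset.sum_congr rfl hcardT, ← Finset.sum_div, ← Nat.cast_sum,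
    sum_powersetCard_ec G W U r hr, density_eq]
  rcases Finset.eq_empty_or_nonempty U with rfl | hU
  · simp
  have hUpos : (0:ℝ) < U.card := by exact_mod_cast hU.card_pos
  have hWpos : (0:ℝ) < W.card := by exact_mod_cast lt_of_lt_of_le hr hrW
  have hrpos : (0:ℝ) < r := by exact_mod_cast hr
  have key : (r:ℝ) * (W.card.choose r) = (W.card : ℝ) * ((W.card - 1).choose (r-1)) := by
    exact_mod_cast congrArg (Nat.cast (R := ℝ)) (nat_key W.card r hr hrW)
  rw [mul_div_assoc']
  rw [div_eq_div_iff (by positivity) (by positivity)]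
  push_cast
  linear_combination (-(ec G W U : ℝ) * (U.card:ℝ)) * key

lemma sum_powersetCard_density_sq (G : SimpleGraph V) (W U : Finset V) (r : ℕ)
    (hr : 1 ≤ r) (hrW : r ≤ W.card) :
    (W.card.choose r : ℝ) * (density G W U)^2
      ≤ ∑ T ∈ W.powersetCard r, (density G T U)^2 := by
  have hN : (0:ℝ) < W.card.choose r := by exact_mod_cast Nat.choose_pos hrW
  have havg := sum_powersetCard_density G W U r hr hrW
  have hCS : (∑ T ∈ W.powersetCard r, density G T U)^2
      ≤ (W.powersetCard r).card * ∑ T ∈ W.powersetCard r, (density G T U)^2 :=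
    sq_sum_le_card_mul_sum_sq
  rw [Finset.card_powersetCard, havg] at hCS
  nlinarith [hCS, hN]

section PhiSec

variable {K : ℕ} (R : SimpleGraph V)

noncomputable def Phi (R : SimpleGraph V) (W : Fin K → Finset V) : ℝ :=
  ∑ p ∈ (Finset.univ (α := Fin K)).offDiag, (density R (W p.1) (W p.2))^2

lemma Phi_nonneg (W : Fin K → Finset V) : 0 ≤ Phi R W :=
  Finset.sum_nonneg fun p _ => sq_nonneg _


lemma Phi_le (W : Fin K → Finset V) : Phi R W ≤ (K:ℝ)^2 := by
  have h1 : Phi R W ≤ ∑ p ∈ (Finset.univ (α := Fin K)).offDiag, (1:ℝ) := by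
    refine Finset.sum_le_sum fun p _ => ?_
    have h2 := density_nonneg R (W p.1) (W p.2)
    have h3 := density_le_one R (W p.1) (W p.2)
    nlinarith
  rw [Finset.sum_const, nsmul_eq_mul, mul_one] at h1
  refine h1.trans ?_
  rw [Finset.offDiag_card]
  push_cast [Finset.card_univ, Fintype.card_fin]
  have : ((K * K - K : ℕ) : ℝ) ≤ (K:ℝ) * K := by
    exact_mod_cast Nat.sub_le _ _
  nlinarith [this]

lemma single_trim (W : Fin K → Finset V) (a : Fin K) (r : ℕ) (hr : 1 ≤ r)
    (hra : r ≤ (W a).card) :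
    ∃ T ⊆ W a, T.card = r ∧ Phi R W ≤ Phi R (Function.update W a T) := by
  set P := (W a).powersetCard r with hP
  have hPne : P.Nonempty := Finset.powersetCard_nonempty.2 hra
  have hsum : ∑ T ∈ P, Phi R W ≤ ∑ T ∈ P, Phi R (Function.update W a T) := by
    have hN : ∑ T ∈ P, Phi R W = ∑ p ∈ (Finset.univ (α := Fin K)).offDiag,
        (P.card : ℝ) * (density R (W p.1) (W p.2))^2 := by
      rw [Finset.sum_const, nsmul_eq_mul]
      unfold Phi
      rw [Finset.mul_sum]
    rw [hN]
    unfold Phi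
    rw [Finset.sum_comm]
    refine Finset.sum_le_sum fun p hp => ?_
    have hpne : p.1 ≠ p.2 := (Finset.mem_offDiag.1 hp).2.2
    rcases eq_or_ne p.1 a with h1 | h1
    · -- p.1 = a, p.2 ≠ a
      have h2 : p.2 ≠ a := h1 ▸ hpne.symm
      have : ∀ T ∈ P, (density R (Function.update W a T p.1) (Function.update W a T p.2))^2
          = (density R T (W p.2))^2 := by
        intro T _
        rw [h1, Function.update_self, Function.update_of_ne h2]
      rw [Finset.sum_congr rfl this, hP, Finset.card_powersetCard, h1]
      exact sum_powersetCard_density_sq R (W a) (W p.2) r hr hra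
    · rcases eq_or_ne p.2 a with h2 | h2
      · have : ∀ T ∈ P, (density R (Function.update W a T p.1) (Function.update W a T p.2))^2
            = (density R T (W p.1))^2 := by
          intro T _
          rw [h2, Function.update_self, Function.update_of_ne h1, density_comm]
        rw [Finset.sum_congr rfl this, hP, Finset.card_powersetCard, h2,
          density_comm R (W p.1) (W a)]
        exact sum_powersetCard_density_sq R (W a) (W p.1) r hr hra
      · have : ∀ T ∈ P, (density R (Function.update W a T p.1) (Function.update W a T p.2))^2
            = (density R (W p.1) (W p.2))^2 := by
          intro T _
          rw [Function.update_of_ne h1, Function.update_of_ne h2]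
        rw [Finset.sum_congr rfl this, Finset.sum_const, nsmul_eq_mul]
  obtain ⟨T, hT, hle⟩ := Finset.exists_le_of_sum_le hPne hsum
  have hTmem := Finset.mem_powersetCard.1 hT
  exact ⟨T, hTmem.1, hTmem.2, hle⟩

lemma trim_all (W : Fin K → Finset V) (r : ℕ) (hr : 1 ≤ r)
    (hall : ∀ i, r ≤ (W i).card) :
    ∃ W' : Fin K → Finset V, (∀ i, W' i ⊆ W i) ∧ (∀ i, (W' i).card = r)
      ∧ Phi R W ≤ Phi R W' := by
  suffices h : ∀ S : Finset (Fin K), ∃ W' : Fin K → Finset V,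
      (∀ i, W' i ⊆ W i) ∧ (∀ i ∈ S, (W' i).card = r) ∧ (∀ i ∉ S, W' i = W i)
      ∧ Phi R W ≤ Phi R W' by
    obtain ⟨W', h1, h2, _, h4⟩ := h Finset.univ
    exact ⟨W', h1, fun i => h2 i (Finset.mem_univ i), h4⟩
  intro S
  induction S using Finset.induction_on with
  | empty => exact ⟨W, fun i => le_refl _, fun i hi => absurd hi (Finset.notMem_empty i),
      fun i _ => rfl, le_refl _⟩
  | @insert a S ha ih =>
    obtain ⟨W', h1, h2, h3, h4⟩ := ih
    have hcard : r ≤ (W' a).card := by rw [h3 a ha]; exact hall a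
    obtain ⟨T, hT1, hT2, hT3⟩ := single_trim R W' a r hr hcard
    refine ⟨Function.update W' a T, ?_, ?_, ?_, h4.trans hT3⟩
    · intro i
      rcases eq_or_ne i a with rfl | hia
      · rw [Function.update_self]
        exact subset_trans hT1 (h1 i)
      · rw [Function.update_of_ne hia]; exact h1 i
    · intro i hi
      rcases eq_or_ne i a with rfl | hia
      · rw [Function.update_self]; exact hT2
      · rw [Function.update_of_ne hia]
        exact h2 i ((Finset.mem_insert.1 hi).resolve_left hia)
    · intro i hi
      rw [Function.update_of_ne (fun hc => hi (by rw [hc]; exact Finset.mem_insert_self a S)),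
        h3 i (fun hc => hi (Finset.mem_insert_of_mem hc))]

end PhiSec

lemma ec_empty_left (G : SimpleGraph V) (U : Finset V) : ec G ∅ U = 0 := by
  unfold ec
  simp

lemma density_empty_left (G : SimpleGraph V) (U : Finset V) : density G ∅ U = 0 := by
  rw [density_eq, ec_empty_left]
  simp

lemma scale1 (G : SimpleGraph V) (X U : Finset V) (m : ℕ) :
    ((X.card : ℝ)/m) * density G X U = (ec G X U : ℝ) / ((m:ℝ) * U.card) := by
  rcases Finset.eq_empty_or_nonempty X with rfl | hX
  · rw [density_empty_left, ec_empty_left]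
    simp
  rcases Finset.eq_empty_or_nonempty U with rfl | hU
  · rw [density_eq]
    simp
  rcases Nat.eq_zero_or_pos m with rfl | hm
  · simp
  have h1 : (0:ℝ) < X.card := by exact_mod_cast hX.card_pos
  have h2 : (0:ℝ) < U.card := by exact_mod_cast hU.card_pos
  have h3 : (0:ℝ) < m := by exact_mod_cast hm
  rw [density_eq]
  field_simp

noncomputable def updW {K : ℕ} (W : Fin K → Finset V) (i₀ j₀ : Fin K) (A B : Finset V) :
    Fin K → Finset V :=
  Function.update (Function.update W i₀ A) j₀ B

lemma jensen2 (a a' x y z : ℝ) (ha : 0 ≤ a) (ha' : 0 ≤ a') (hsum : a + a' = 1)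
    (hmean : a*x + a'*y = z) : z^2 ≤ a*x^2 + a'*y^2 := by
  have hkey : a*x^2 + a'*y^2 - (a*x+a'*y)^2 = a*a'*(x-y)^2 := by
    linear_combination (-(a*x^2+a'*y^2) - (a*x+a'*y)*(x+y)*0) * hsum + 0*hmean
  rw [← hmean]
  nlinarith [hkey, mul_nonneg (mul_nonneg ha ha') (sq_nonneg (x-y))]

lemma jensen4 (w1 w2 w3 w4 d1 d2 d3 d4 d : ℝ) (h1 : 0 ≤ w1) (h2 : 0 ≤ w2) (h3 : 0 ≤ w3)
    (h4 : 0 ≤ w4) (hsum : w1+w2+w3+w4 = 1) (hmean : w1*d1+w2*d2+w3*d3+w4*d4 = d) :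
    d^2 + w1*(d1-d)^2 ≤ w1*d1^2+w2*d2^2+w3*d3^2+w4*d4^2 := by
  have hkey : (w1*d1^2+w2*d2^2+w3*d3^2+w4*d4^2) - d^2 - w1*(d1-d)^2
      = w2*(d2-d)^2+w3*(d3-d)^2+w4*(d4-d)^2
        + 2*d*((w1*d1+w2*d2+w3*d3+w4*d4) - d) + d^2*(1 - (w1+w2+w3+w4)) := by
    ring
  rw [hmean, hsum] at hkey
  nlinarith [hkey, mul_nonneg h2 (sq_nonneg (d2-d)), mul_nonneg h3 (sq_nonneg (d3-d)),
    mul_nonneg h4 (sq_nonneg (d4-d))]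

set_option maxHeartbeats 4000000 in
theorem step {K : ℕ} (R : SimpleGraph V) (ε : ℝ) (W : Fin K → Finset V) (m : ℕ)
    (i₀ j₀ : Fin K) (X Y : Finset V)
    (hε0 : 0 < ε) (hm : 0 < m) (hcards : ∀ i, (W i).card = m)
    (hne : i₀ ≠ j₀) (hX : X ⊆ W i₀) (hY : Y ⊆ W j₀)
    (hXc : ε * m < X.card) (hYc : ε * m < Y.card)
    (hdev : ε ≤ |density R X Y - density R (W i₀) (W j₀)|) :
    ∃ A B : Finset V, A ⊆ W i₀ ∧ B ⊆ W j₀ ∧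
      (ε^4/(8*(K:ℝ)^2)) * m ≤ A.card ∧ (ε^4/(8*(K:ℝ)^2)) * m ≤ B.card ∧
      Phi R W + ε^4/2 ≤ Phi R (updW W i₀ j₀ A B) := by
  classical
  have hKpos : (0:ℝ) < (K:ℝ) := by
    have : 0 < K := Fin.pos i₀
    exact_mod_cast this
  set η : ℝ := ε^4/(8*(K:ℝ)^2) with hη
  have hηpos : 0 < η := by positivity
  set X' := W i₀ \ X with hX'
  set Y' := W j₀ \ Y with hY'
  have hX'sub : X' ⊆ W i₀ := Finset.sdiff_subset
  have hY'sub : Y' ⊆ W j₀ := Finset.sdiff_subset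
  have hmR : (0:ℝ) < m := by exact_mod_cast hm
  set a : ℝ := (X.card : ℝ)/m with ha
  set a' : ℝ := (X'.card : ℝ)/m with ha'
  set b : ℝ := (Y.card : ℝ)/m with hb
  set b' : ℝ := (Y'.card : ℝ)/m with hb'
  have hXm : X.card ≤ m := by rw [← hcards i₀]; exact Finset.card_le_card hX
  have hYm : Y.card ≤ m := by rw [← hcards j₀]; exact Finset.card_le_card hY
  have haa' : a + a' = 1 := by
    rw [ha, ha', hX', Finset.card_sdiff_of_subset hX, hcards i₀, ← add_div,
      div_eq_one_iff_eq (ne_of_gt hmR)]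
    push_cast [Nat.cast_sub hXm]
    ring
  have hbb' : b + b' = 1 := by
    rw [hb, hb', hY', Finset.card_sdiff_of_subset hY, hcards j₀, ← add_div,
      div_eq_one_iff_eq (ne_of_gt hmR)]
    push_cast [Nat.cast_sub hYm]
    ring
  have ha0 : 0 ≤ a := by positivity
  have ha'0 : 0 ≤ a' := by positivity
  have hb0 : 0 ≤ b := by positivity
  have hb'0 : 0 ≤ b' := by positivity
  have hsum1 : a*b + a*b' + a'*b + a'*b' = 1 := by
    have : (a+a')*(b+b') = 1 := by rw [haa', hbb', mul_one]
    linear_combination this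
  have haε : ε < a := by rw [ha, lt_div_iff₀ hmR]; linarith [hXc]
  have hbε : ε < b := by rw [hb, lt_div_iff₀ hmR]; linarith [hYc]
  -- mean identities
  have meanL : ∀ U : Finset V, a * density R X U + a' * density R X' U
      = density R (W i₀) U := by
    intro U
    rw [ha, ha', scale1 R X U m, scale1 R X' U m, density_eq R (W i₀) U, hcards i₀,
      ← add_div, ← Nat.cast_add, ← ec_sdiff_left R U hX]
  have meanLj : ∀ U : Finset V, b * density R Y U + b' * density R Y' U
      = density R (W j₀) U := by
    intro U
    rw [hb, hb', scale1 R Y U m, scale1 R Y' U m, density_eq R (W j₀) U, hcards j₀,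
      ← add_div, ← Nat.cast_add, ← ec_sdiff_left R U hY]
  have meanR : ∀ U : Finset V, b * density R U Y + b' * density R U Y'
      = density R U (W j₀) := by
    intro U
    rw [density_comm R U Y, density_comm R U Y', density_comm R U (W j₀)]
    exact meanLj U
  have meanRi : ∀ U : Finset V, a * density R U X + a' * density R U X'
      = density R U (W i₀) := by
    intro U
    rw [density_comm R U X, density_comm R U X', density_comm R U (W i₀)]
    exact meanL U
  set d0 := density R (W i₀) (W j₀) with hd0
  set g : ℝ := (a*b) * (density R X Y - d0)^2 with hg
  -- evaluation of updW
  have hu1 : ∀ A B : Finset V, updW W i₀ j₀ A B i₀ = A := by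
    intro A B
    unfold updW
    rw [Function.update_of_ne hne, Function.update_self]
  have hu2 : ∀ A B : Finset V, updW W i₀ j₀ A B j₀ = B := by
    intro A B
    unfold updW
    rw [Function.update_self]
  have hu3 : ∀ (A B : Finset V) (l : Fin K), l ≠ i₀ → l ≠ j₀ → updW W i₀ j₀ A B l = W l := by
    intro A B l h1 h2
    unfold updW
    rw [Function.update_of_ne h2, Function.update_of_ne h1]
  -- the main expectation inequality
  have main : Phi R W + g ≤ (a*b) * Phi R (updW W i₀ j₀ X Y)
      + (a*b') * Phi R (updW W i₀ j₀ X Y') + (a'*b) * Phi R (updW W i₀ j₀ X' Y)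
      + (a'*b') * Phi R (updW W i₀ j₀ X' Y') := by
    unfold Phi
    rw [Finset.mul_sum, Finset.mul_sum, Finset.mul_sum, Finset.mul_sum,
      ← Finset.sum_add_distrib, ← Finset.sum_add_distrib, ← Finset.sum_add_distrib]
    have hmem : (i₀, j₀) ∈ (Finset.univ (α := Fin K)).offDiag := by
      simp [Finset.mem_offDiag, hne]
    calc (∑ p ∈ (Finset.univ (α := Fin K)).offDiag, (density R (W p.1) (W p.2))^2) + g
        = ∑ p ∈ (Finset.univ (α := Fin K)).offDiag,
            ((density R (W p.1) (W p.2))^2 + if p = (i₀, j₀) then g else 0) := by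
          rw [Finset.sum_add_distrib, Finset.sum_ite_eq' _ (i₀, j₀)]
          simp [hmem]
      _ ≤ _ := by
          refine Finset.sum_le_sum fun p hp => ?_
          obtain ⟨-, -, hp12⟩ := Finset.mem_offDiag.1 hp
          rcases eq_or_ne p.1 i₀ with h1i | h1i
          · rcases eq_or_ne p.2 j₀ with h2j | h2j
            · -- p = (i₀, j₀)
              have hpeq : p = (i₀, j₀) := Prod.ext h1i h2j
              rw [if_pos hpeq, h1i, h2j]
              simp only [hu1, hu2]
              have hmean : (a*b) * density R X Y + (a*b') * density R X Y'
                  + (a'*b) * density R X' Y + (a'*b') * density R X' Y' = d0 := by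
                have e1 := meanR X
                have e2 := meanR X'
                have e3 := meanL (W j₀)
                rw [hd0, ← e3, ← e1, ← e2]
                ring
              have hj4 := jensen4 (a*b) (a*b') (a'*b) (a'*b')
                (density R X Y) (density R X Y') (density R X' Y) (density R X' Y') d0
                (mul_nonneg ha0 hb0) (mul_nonneg ha0 hb'0) (mul_nonneg ha'0 hb0) (mul_nonneg ha'0 hb'0)
                hsum1 hmean
              rw [hg]
              linarith [hj4]
            · -- p.1 = i₀, p.2 ∉ {i₀, j₀}
              have h2i : p.2 ≠ i₀ := h1i ▸ hp12.symm
              rw [if_neg (fun hc => h2j (congrArg Prod.snd hc)), add_zero, h1i]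
              simp only [hu1, hu2, hu3 _ _ _ h2i h2j]
              have hj2 := jensen2 a a' (density R X (W p.2)) (density R X' (W p.2))
                (density R (W i₀) (W p.2)) ha0 ha'0 haa' (meanL (W p.2))
              have hexp : (a*b) * (density R X (W p.2))^2 + (a*b') * (density R X (W p.2))^2
                  + (a'*b) * (density R X' (W p.2))^2 + (a'*b') * (density R X' (W p.2))^2
                  = a * (density R X (W p.2))^2 + a' * (density R X' (W p.2))^2 := by
                linear_combination (a * (density R X (W p.2))^2
                  + a' * (density R X' (W p.2))^2) * hbb'
              rw [hexp]
              exact hj2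
          · rcases eq_or_ne p.1 j₀ with h1j | h1j
            · rcases eq_or_ne p.2 i₀ with h2i | h2i
              · -- p = (j₀, i₀)
                rw [if_neg (fun hc => h1i (congrArg Prod.fst hc)), add_zero, h1j, h2i]
                simp only [hu1, hu2]
                have hmean : (a*b) * density R Y X + (a*b') * density R Y' X
                    + (a'*b) * density R Y X' + (a'*b') * density R Y' X'
                    = density R (W j₀) (W i₀) := by
                  have e1 := meanLj X
                  have e2 := meanLj X'
                  have e3 := meanRi (W j₀)
                  rw [← e3, ← e1, ← e2]
                  ring
                have hj4 := jensen4 (a*b) (a*b') (a'*b) (a'*b')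
                  (density R Y X) (density R Y' X) (density R Y X') (density R Y' X')
                  (density R (W j₀) (W i₀))
                  (by positivity) (by positivity) (by positivity) (by positivity)
                  hsum1 hmean
                nlinarith [hj4, mul_nonneg (mul_nonneg ha0 hb0)
                  (sq_nonneg (density R Y X - density R (W j₀) (W i₀)))]
              · -- p.1 = j₀, p.2 ∉ {i₀, j₀}
                have h2j : p.2 ≠ j₀ := h1j ▸ hp12.symm
                rw [if_neg (fun hc => h1i (congrArg Prod.fst hc)), add_zero, h1j]
                simp only [hu1, hu2, hu3 _ _ _ h2i h2j]
                have hj2 := jensen2 b b' (density R Y (W p.2)) (density R Y' (W p.2))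
                  (density R (W j₀) (W p.2)) hb0 hb'0 hbb' (meanLj (W p.2))
                have hexp : (a*b) * (density R Y (W p.2))^2 + (a*b') * (density R Y' (W p.2))^2
                    + (a'*b) * (density R Y (W p.2))^2 + (a'*b') * (density R Y' (W p.2))^2
                    = b * (density R Y (W p.2))^2 + b' * (density R Y' (W p.2))^2 := by
                  linear_combination (b * (density R Y (W p.2))^2
                    + b' * (density R Y' (W p.2))^2) * haa'
                rw [hexp]
                exact hj2
            · -- p.1 ∉ {i₀, j₀}
              rw [if_neg (fun hc => h1i (congrArg Prod.fst hc)), add_zero]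
              rcases eq_or_ne p.2 i₀ with h2i | h2i
              · rw [h2i]
                simp only [hu1, hu3 _ _ _ h1i h1j]
                have hj2 := jensen2 a a' (density R (W p.1) X) (density R (W p.1) X')
                  (density R (W p.1) (W i₀)) ha0 ha'0 haa' (meanRi (W p.1))
                have hexp : (a*b) * (density R (W p.1) X)^2 + (a*b') * (density R (W p.1) X)^2
                    + (a'*b) * (density R (W p.1) X')^2 + (a'*b') * (density R (W p.1) X')^2
                    = a * (density R (W p.1) X)^2 + a' * (density R (W p.1) X')^2 := by
                  linear_combination (a * (density R (W p.1) X)^2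
                    + a' * (density R (W p.1) X')^2) * hbb'
                rw [hexp]
                exact hj2
              · rcases eq_or_ne p.2 j₀ with h2j | h2j
                · rw [h2j]
                  simp only [hu2, hu3 _ _ _ h1i h1j]
                  have hj2 := jensen2 b b' (density R (W p.1) Y) (density R (W p.1) Y')
                    (density R (W p.1) (W j₀)) hb0 hb'0 hbb' (meanR (W p.1))
                  have hexp : (a*b) * (density R (W p.1) Y)^2
                      + (a*b') * (density R (W p.1) Y')^2
                      + (a'*b) * (density R (W p.1) Y)^2
                      + (a'*b') * (density R (W p.1) Y')^2
                      = b * (density R (W p.1) Y)^2 + b' * (density R (W p.1) Y')^2 := by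
                    linear_combination (b * (density R (W p.1) Y)^2
                      + b' * (density R (W p.1) Y')^2) * haa'
                  rw [hexp]
                  exact hj2
                · simp only [hu3 _ _ _ h1i h1j, hu3 _ _ _ h2i h2j]
                  have hexp : (a*b) * (density R (W p.1) (W p.2))^2
                      + (a*b') * (density R (W p.1) (W p.2))^2
                      + (a'*b) * (density R (W p.1) (W p.2))^2
                      + (a'*b') * (density R (W p.1) (W p.2))^2
                      = (density R (W p.1) (W p.2))^2 := by
                    linear_combination ((density R (W p.1) (W p.2))^2) * hsum1
                  rw [hexp]
  -- gain is large
  have hgain : ε^4 < g := by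
    rw [hg]
    have h1 : ε^2 < a*b := by nlinarith
    have h2 : ε^2 ≤ (density R X Y - d0)^2 := by
      have habs := sq_abs (density R X Y - d0)
      nlinarith [hdev, hε0]
    nlinarith [pow_pos hε0 2]
  -- extraction of a good outcome
  by_contra hcon
  push_neg at hcon
  -- every candidate outcome is either small or fails the potential increment
  have key : ∀ A B : Finset V, A ⊆ W i₀ → B ⊆ W j₀ →
      ((A.card:ℝ)/m) * ((B.card:ℝ)/m) * Phi R (updW W i₀ j₀ A B)
        ≤ ((A.card:ℝ)/m) * ((B.card:ℝ)/m) * (Phi R W + ε^4/2) + η * (K:ℝ)^2 := by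
    intro A B hA hB
    have hwa0 : (0:ℝ) ≤ (A.card:ℝ)/m := by positivity
    have hwb0 : (0:ℝ) ≤ (B.card:ℝ)/m := by positivity
    have hwa1 : (A.card:ℝ)/m ≤ 1 := by
      rw [div_le_one hmR]
      exact_mod_cast (hcards i₀) ▸ Finset.card_le_card hA
    have hwb1 : (B.card:ℝ)/m ≤ 1 := by
      rw [div_le_one hmR]
      exact_mod_cast (hcards j₀) ▸ Finset.card_le_card hB
    have hPhi0 := Phi_nonneg R W
    have hPhiU0 := Phi_nonneg R (updW W i₀ j₀ A B)
    have hPhiUle := Phi_le R (updW W i₀ j₀ A B)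
    by_cases hgood : η * m ≤ (A.card:ℝ) ∧ η * m ≤ (B.card:ℝ)
    · have hlt : Phi R (updW W i₀ j₀ A B) < Phi R W + ε^4/2 :=
        hcon A B hA hB hgood.1 hgood.2
      have := mul_le_mul_of_nonneg_left hlt.le (mul_nonneg hwa0 hwb0)
      nlinarith [this, mul_nonneg hηpos.le (sq_nonneg (K:ℝ))]
    · have hw : ((A.card:ℝ)/m) * ((B.card:ℝ)/m) ≤ η := by
        rcases not_and_or.1 hgood with hbad | hbad
        · push_neg at hbad
          have : (A.card:ℝ)/m < η := by rw [div_lt_iff₀ hmR]; linarith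
          nlinarith
        · push_neg at hbad
          have : (B.card:ℝ)/m < η := by rw [div_lt_iff₀ hmR]; linarith
          nlinarith
      have h1 : ((A.card:ℝ)/m) * ((B.card:ℝ)/m) * Phi R (updW W i₀ j₀ A B)
          ≤ η * (K:ℝ)^2 := by
        have hw0 : (0:ℝ) ≤ ((A.card:ℝ)/m) * ((B.card:ℝ)/m) := mul_nonneg hwa0 hwb0
        calc ((A.card:ℝ)/m) * ((B.card:ℝ)/m) * Phi R (updW W i₀ j₀ A B)
            ≤ ((A.card:ℝ)/m) * ((B.card:ℝ)/m) * (K:ℝ)^2 :=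
              mul_le_mul_of_nonneg_left hPhiUle hw0
          _ ≤ η * (K:ℝ)^2 := mul_le_mul_of_nonneg_right hw (sq_nonneg _)
      nlinarith [mul_nonneg (mul_nonneg hwa0 hwb0) (by linarith [pow_pos hε0 4] : (0:ℝ) ≤ Phi R W + ε^4/2)]
  have k1 := key X Y hX hY
  have k2 := key X Y' hX hY'sub
  have k3 := key X' Y hX'sub hY
  have k4 := key X' Y' hX'sub hY'sub
  rw [← ha, ← hb] at k1
  rw [← ha, ← hb'] at k2
  rw [← ha', ← hb] at k3
  rw [← ha', ← hb'] at k4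
  have hEta : 4 * (η * (K:ℝ)^2) = ε^4/2 := by
    rw [hη]
    field_simp
    ring
  have hfinal : Phi R W + g ≤ Phi R W + ε^4/2 + 4 * (η * (K:ℝ)^2) := by
    calc Phi R W + g ≤ (a*b) * Phi R (updW W i₀ j₀ X Y)
        + (a*b') * Phi R (updW W i₀ j₀ X Y') + (a'*b) * Phi R (updW W i₀ j₀ X' Y)
        + (a'*b') * Phi R (updW W i₀ j₀ X' Y') := main
      _ ≤ (a*b + a*b' + a'*b + a'*b') * (Phi R W + ε^4/2) + 4 * (η * (K:ℝ)^2) := by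
          linarith [k1, k2, k3, k4]
      _ = Phi R W + ε^4/2 + 4 * (η * (K:ℝ)^2) := by rw [hsum1]; ring
  rw [hEta] at hfinal
  linarith [hgain, hfinal]

theorem iterate {K : ℕ} (R : SimpleGraph V) (ε : ℝ) (hε0 : 0 < ε) (hε1 : ε ≤ 1)
    (hK : 0 < K) (N : ℕ) :
    ∀ (m : ℕ) (W : Fin K → Finset V), 0 < m → (∀ i, (W i).card = m) →
      (K:ℝ)^2 - N * (ε^4/2) ≤ Phi R W →
      ∃ (m' : ℕ) (W' : Fin K → Finset V), 0 < m' ∧ (∀ i, W' i ⊆ W i) ∧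
        (∀ i, (W' i).card = m') ∧
        ((ε^4/(8*(K:ℝ)^2))^N * m ≤ (m' : ℝ)) ∧
        ∀ i j, i ≠ j → EpsRegular R ε (W' i) (W' j) := by
  have hKR : (0:ℝ) < (K:ℝ) := by exact_mod_cast hK
  set η : ℝ := ε^4/(8*(K:ℝ)^2) with hη
  have hηpos : 0 < η := by positivity
  have hη1 : η ≤ 1 := by
    rw [hη]
    rw [div_le_one (by positivity)]
    have h1 : ε^4 ≤ 1 := pow_le_one₀ hε0.le hε1
    have h2 : (1:ℝ) ≤ (K:ℝ)^2 := by
      have : (1:ℝ) ≤ (K:ℝ) := by exact_mod_cast hK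
      nlinarith
    nlinarith
  induction N with
  | zero =>
    intro m W hm hcards hPhi
    by_cases hreg : ∀ i j : Fin K, i ≠ j → EpsRegular R ε (W i) (W j)
    · exact ⟨m, W, hm, fun i => le_refl _, hcards, by norm_num, hreg⟩
    · exfalso
      push_neg at hreg
      obtain ⟨i₀, j₀, hne, hnreg⟩ := hreg
      unfold EpsRegular at hnreg
      push_neg at hnreg
      obtain ⟨X, hX, Y, hY, hXc, hYc, hdev⟩ := hnreg
      rw [hcards i₀] at hXc
      rw [hcards j₀] at hYc
      obtain ⟨A, B, -, -, -, -, hstep⟩ :=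
        step R ε W m i₀ j₀ X Y hε0 hm hcards hne hX hY hXc hYc hdev
      have h1 := Phi_le R (updW W i₀ j₀ A B)
      simp only [Nat.cast_zero, zero_mul, sub_zero] at hPhi
      nlinarith [pow_pos hε0 4]
  | succ N ih =>
    intro m W hm hcards hPhi
    by_cases hreg : ∀ i j : Fin K, i ≠ j → EpsRegular R ε (W i) (W j)
    · refine ⟨m, W, hm, fun i => le_refl _, hcards, ?_, hreg⟩
      have h1 : η^(N+1) ≤ 1 := pow_le_one₀ hηpos.le hη1
      have h2 : (0:ℝ) ≤ m := by positivity
      nlinarith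
    · push_neg at hreg
      obtain ⟨i₀, j₀, hne, hnreg⟩ := hreg
      unfold EpsRegular at hnreg
      push_neg at hnreg
      obtain ⟨X, hX, Y, hY, hXc, hYc, hdev⟩ := hnreg
      rw [hcards i₀] at hXc
      rw [hcards j₀] at hYc
      obtain ⟨A, B, hA, hB, hAc, hBc, hstep⟩ :=
        step R ε W m i₀ j₀ X Y hε0 hm hcards hne hX hY hXc hYc hdev
      set W₁ := updW W i₀ j₀ A B with hW₁
      have hW₁sub : ∀ i, W₁ i ⊆ W i := by
        intro i
        rw [hW₁]
        unfold updW
        rcases eq_or_ne i j₀ with rfl | hij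
        · rw [Function.update_self]; exact hB
        · rw [Function.update_of_ne hij]
          rcases eq_or_ne i i₀ with rfl | hii
          · rw [Function.update_self]; exact hA
          · rw [Function.update_of_ne hii]
      set m' : ℕ := min A.card B.card with hm'
      have hm'A : (m' : ℝ) ≤ A.card := by
        rw [hm']; exact_mod_cast Nat.cast_le.2 (min_le_left _ _)
      have hηm' : η * m ≤ (m' : ℝ) := by
        rw [hm']
        push_cast [Nat.cast_min]
        exact le_min hAc hBc
      have hm'pos : 0 < m' := by
        have : (0:ℝ) < (m':ℝ) := lt_of_lt_of_le (by positivity) hηm'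
        exact_mod_cast this
      have hm'le : ∀ i, m' ≤ (W₁ i).card := by
        intro i
        rw [hW₁]
        unfold updW
        rcases eq_or_ne i j₀ with rfl | hij
        · rw [Function.update_self]; exact min_le_right _ _
        · rw [Function.update_of_ne hij]
          rcases eq_or_ne i i₀ with rfl | hii
          · rw [Function.update_self]; exact min_le_left _ _
          · rw [Function.update_of_ne hii, hcards]
            calc m' ≤ A.card := min_le_left _ _
              _ ≤ m := by rw [← hcards i₀]; exact Finset.card_le_card hA
      obtain ⟨W₂, hW₂sub, hW₂cards, hW₂Phi⟩ := trim_all R W₁ m' hm'pos hm'le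
      have hPhi2 : (K:ℝ)^2 - N * (ε^4/2) ≤ Phi R W₂ := by
        push_cast at hPhi ⊢
        nlinarith [hstep, hW₂Phi]
      obtain ⟨m'', W'', hm''pos, hsub'', hcards'', hbound'', hreg''⟩ :=
        ih m' W₂ hm'pos hW₂cards hPhi2
      refine ⟨m'', W'', hm''pos, ?_, hcards'', ?_, hreg''⟩
      · intro i
        exact (hsub'' i).trans ((hW₂sub i).trans (hW₁sub i))
      · calc η^(N+1) * m = η^N * (η * m) := by ring
          _ ≤ η^N * m' := by
            refine mul_le_mul_of_nonneg_left hηm' (by positivity)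
          _ ≤ m'' := hbound''

theorem ramsey {α : Type*} [DecidableEq α] (f : α → α → Prop)
    (hsym : ∀ x y, f x y → f y x) :
    ∀ (n a b : ℕ), a + b = n → ∀ S : Finset α, (a+b).choose a ≤ S.card →
      ∃ T ⊆ S, (a+1 ≤ T.card ∧ ∀ i ∈ T, ∀ j ∈ T, i ≠ j → f i j)
        ∨ (b+1 ≤ T.card ∧ ∀ i ∈ T, ∀ j ∈ T, i ≠ j → ¬ f i j) := by
  intro n
  induction n with
  | zero =>
    intro a b hab S hS
    have ha : a = 0 := by omega
    have hb : b = 0 := by omega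
    subst ha; subst hb
    simp only [Nat.choose_self] at hS
    obtain ⟨x, hx⟩ := Finset.card_pos.1 hS
    exact ⟨{x}, Finset.singleton_subset_iff.2 hx,
      Or.inl ⟨by simp, fun i hi j hj hij => absurd (by
        rw [Finset.mem_singleton] at hi hj
        rw [hi, hj]) hij⟩⟩
  | succ n ih =>
    intro a b hab S hS
    rcases Nat.eq_zero_or_pos a with rfl | hapos
    · have h1 : 1 ≤ S.card := by
        simpa using hS
      obtain ⟨x, hx⟩ := Finset.card_pos.1 h1
      exact ⟨{x}, Finset.singleton_subset_iff.2 hx,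
        Or.inl ⟨by simp, fun i hi j hj hij => absurd (by
          rw [Finset.mem_singleton] at hi hj
          rw [hi, hj]) hij⟩⟩
    rcases Nat.eq_zero_or_pos b with rfl | hbpos
    · have h1 : 1 ≤ S.card := by
        simpa using hS
      obtain ⟨x, hx⟩ := Finset.card_pos.1 h1
      exact ⟨{x}, Finset.singleton_subset_iff.2 hx,
        Or.inr ⟨by simp, fun i hi j hj hij => absurd (by
          rw [Finset.mem_singleton] at hi hj
          rw [hi, hj]) hij⟩⟩
    obtain ⟨a', rfl⟩ : ∃ a', a = a' + 1 := ⟨a - 1, by omega⟩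
    obtain ⟨b', rfl⟩ : ∃ b', b = b' + 1 := ⟨b - 1, by omega⟩
    have hSpos : 0 < S.card := lt_of_lt_of_le (Nat.choose_pos (by omega)) hS
    obtain ⟨x, hx⟩ := Finset.card_pos.1 hSpos
    set S' := S.erase x with hS'
    set Nr := S'.filter (fun y => f x y) with hNr
    set Nb := S'.filter (fun y => ¬ f x y) with hNb
    have hsplit : Nr.card + Nb.card = S.card - 1 := by
      rw [hNr, hNb, Finset.card_filter_add_card_filter_not, hS',
        Finset.card_erase_of_mem hx]
    have hchoose : (a' + 1 + (b' + 1)).choose (a' + 1)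
        = (a' + (b' + 1)).choose a' + (a' + 1 + b').choose (a' + 1) := by
      have h1 : a' + 1 + (b' + 1) = (a' + 1 + b') + 1 := by ring
      rw [h1, Nat.choose_succ_succ (a' + 1 + b') a']
      congr 2
      omega
    have hcases : (a' + (b' + 1)).choose a' ≤ Nr.card
        ∨ (a' + 1 + b').choose (a' + 1) ≤ Nb.card := by
      by_contra hc
      push_neg at hc
      omega
    rcases hcases with hcase | hcase
    · obtain ⟨T, hT, hTcase⟩ := ih a' (b' + 1) (by omega) Nr hcase
      rcases hTcase with ⟨hTcard, hTred⟩ | ⟨hTcard, hTblue⟩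
      · -- extend the red clique with x
        have hxT : x ∉ T := fun hc =>
          (Finset.notMem_erase x S) ((Finset.filter_subset _ _) (hT hc))
        refine ⟨insert x T, ?_, Or.inl ⟨?_, ?_⟩⟩
        · intro y hy
          rcases Finset.mem_insert.1 hy with rfl | hy
          · exact hx
          · exact (Finset.erase_subset x S) ((Finset.filter_subset _ _) (hT hy))
        · rw [Finset.card_insert_of_notMem hxT]
          omega
        · intro i hi j hj hij
          rcases Finset.mem_insert.1 hi with hix | hi
          · rcases Finset.mem_insert.1 hj with hjx | hj
            · exact absurd (hix.trans hjx.symm) hij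
            · rw [hix]
              exact (Finset.mem_filter.1 (hT hj)).2
          · rcases Finset.mem_insert.1 hj with hjx | hj
            · rw [hjx]
              exact hsym _ _ (Finset.mem_filter.1 (hT hi)).2
            · exact hTred i hi j hj hij
      · exact ⟨T, hT.trans ((Finset.filter_subset _ _).trans (Finset.erase_subset x S)),
          Or.inr ⟨hTcard, hTblue⟩⟩
    · obtain ⟨T, hT, hTcase⟩ := ih (a' + 1) b' (by omega) Nb hcase
      rcases hTcase with ⟨hTcard, hTred⟩ | ⟨hTcard, hTblue⟩
      · exact ⟨T, hT.trans ((Finset.filter_subset _ _).trans (Finset.erase_subset x S)),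
          Or.inl ⟨hTcard, hTred⟩⟩
      · have hxT : x ∉ T := fun hc =>
          (Finset.notMem_erase x S) ((Finset.filter_subset _ _) (hT hc))
        refine ⟨insert x T, ?_, Or.inr ⟨?_, ?_⟩⟩
        · intro y hy
          rcases Finset.mem_insert.1 hy with rfl | hy
          · exact hx
          · exact (Finset.erase_subset x S) ((Finset.filter_subset _ _) (hT hy))
        · rw [Finset.card_insert_of_notMem hxT]
          omega
        · intro i hi j hj hij
          rcases Finset.mem_insert.1 hi with hix | hi
          · rcases Finset.mem_insert.1 hj with hjx | hj
            · exact absurd (hix.trans hjx.symm) hij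
            · rw [hix]
              exact (Finset.mem_filter.1 (hT hj)).2
          · rcases Finset.mem_insert.1 hj with hjx | hj
            · rw [hjx]
              exact fun hc => (Finset.mem_filter.1 (hT hi)).2 (hsym _ _ hc)
            · exact hTblue i hi j hj hij

lemma centralBinom_sq_bound (m : ℕ) :
    ((Nat.centralBinom m : ℝ))^2 * (3*m+1) ≤ 16^m := by
  induction m with
  | zero => norm_num [Nat.centralBinom_zero]
  | succ m ih =>
    have hrec : ((m:ℝ) + 1) * (Nat.centralBinom (m+1) : ℝ)
        = 2 * (2*m+1) * Nat.centralBinom m := by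
      exact_mod_cast congrArg (Nat.cast (R := ℝ)) (Nat.succ_mul_centralBinom_succ m)
    have hm1 : ((m+1 : ℕ) : ℝ) = (m:ℝ)+1 := by push_cast; ring
    rw [hm1]
    have hpos : (0:ℝ) < ((m:ℝ)+1)^2 * (3*m+1) := by positivity
    rw [← mul_le_mul_iff_of_pos_right hpos]
    have hpoly : (4:ℝ) * (2*m+1)^2 * (3*((m:ℝ)+1)+1) ≤ 16 * ((m:ℝ)+1)^2 * (3*m+1) := by
      nlinarith [sq_nonneg ((m:ℝ))]
    calc (Nat.centralBinom (m+1) : ℝ)^2 * (3*((m:ℝ)+1)+1) * (((m:ℝ)+1)^2 * (3*m+1))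
        = (((m:ℝ)+1) * (Nat.centralBinom (m+1) : ℝ))^2 * ((3*((m:ℝ)+1)+1) * (3*m+1)) := by
          ring
      _ = (2 * (2*(m:ℝ)+1) * Nat.centralBinom m)^2 * ((3*((m:ℝ)+1)+1) * (3*m+1)) := by
          rw [hrec]
      _ = (4 * (2*(m:ℝ)+1)^2 * (3*((m:ℝ)+1)+1)) * ((Nat.centralBinom m : ℝ)^2 * (3*m+1)) := by
          ring
      _ ≤ (16 * ((m:ℝ)+1)^2 * (3*m+1)) * (16^m) := by
          have h1 : (0:ℝ) ≤ (Nat.centralBinom m : ℝ)^2 * (3*m+1) := by positivity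
          exact mul_le_mul hpoly ih h1 (by positivity)
      _ = 16^(m+1) * (((m:ℝ)+1)^2 * (3*m+1)) := by ring

lemma centralBinom_le_four_pow_real (m : ℕ) :
    (Nat.centralBinom m : ℝ) ≤ 4^m := by
  have h := centralBinom_sq_bound m
  have h1 : ((Nat.centralBinom m : ℝ))^2 ≤ (4^m)^2 := by
    have h3 : (1:ℝ) ≤ 3*m+1 := by
      have : (0:ℝ) ≤ (m:ℝ) := by positivity
      linarith
    have h4 : ((4:ℝ)^m)^2 = 16^m := by
      rw [← pow_mul, pow_mul']
      norm_num
    nlinarith [sq_nonneg ((Nat.centralBinom m : ℝ))]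
  exact le_of_pow_le_pow_left₀ (by norm_num) (by positivity) h1

lemma centralBinom_le_four_pow (m : ℕ) : Nat.centralBinom m ≤ 4^m := by
  have := centralBinom_le_four_pow_real m
  exact_mod_cast this

lemma linear_le_pow (k : ℕ) (hk : 1 ≤ k) : ((4*k+3 : ℕ) : ℝ) ≤ 2^(4*k) := by
  induction k, hk using Nat.le_induction with
  | base => norm_num
  | succ k hk ih =>
    have h1 : (2:ℝ)^(4*(k+1)) = 16 * 2^(4*k) := by
      rw [show 4*(k+1) = 4*k+4 by ring, pow_add]
      ring
    have h2 : (1:ℝ) ≤ 2^(4*k) := one_le_pow₀ (by norm_num)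
    push_cast at ih ⊢
    rw [h1]
    nlinarith

/-- extracting K disjoint sets of size m -/
lemma partition_exists {V : Type*} [DecidableEq V] :
    ∀ (K : ℕ) (m : ℕ) (S : Finset V), K * m ≤ S.card →
      ∃ W : Fin K → Finset V, (∀ i, W i ⊆ S) ∧
        (∀ i j, i ≠ j → Disjoint (W i) (W j)) ∧ ∀ i, (W i).card = m := by
  intro K
  induction K with
  | zero =>
    intro m S _
    exact ⟨fun i => i.elim0, fun i => i.elim0, fun i => i.elim0, fun i => i.elim0⟩
  | succ K ih =>
    intro m S hS
    have hS' : K * m + m ≤ S.card := by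
      calc K * m + m = (K+1) * m := by ring
        _ ≤ S.card := hS
    have hm : m ≤ S.card := le_trans (Nat.le_add_left m (K*m)) hS'
    obtain ⟨T, hTS, hTcard⟩ := Finset.exists_subset_card_eq hm
    have hrest : K * m ≤ (S \ T).card := by
      rw [Finset.card_sdiff_of_subset hTS, hTcard]
      omega
    obtain ⟨W', hW'sub, hW'disj, hW'card⟩ := ih m (S \ T) hrest
    have hTdisj : ∀ j : Fin K, Disjoint T (W' j) :=
      fun j => Finset.disjoint_right.2 fun x hx' hx =>
        (Finset.mem_sdiff.1 (hW'sub j hx')).2 hx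
    refine ⟨Fin.cons T W', ?_, ?_, ?_⟩
    · intro i
      rcases Fin.eq_zero_or_eq_succ i with rfl | ⟨i', rfl⟩
      · rw [Fin.cons_zero]; exact hTS
      · rw [Fin.cons_succ]
        exact (hW'sub i').trans (Finset.sdiff_subset)
    · intro i j hij
      rcases Fin.eq_zero_or_eq_succ i with rfl | ⟨i', rfl⟩
      · rcases Fin.eq_zero_or_eq_succ j with rfl | ⟨j', rfl⟩
        · exact absurd rfl hij
        · rw [Fin.cons_zero, Fin.cons_succ]
          exact hTdisj j'
      · rcases Fin.eq_zero_or_eq_succ j with rfl | ⟨j', rfl⟩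
        · rw [Fin.cons_zero, Fin.cons_succ]
          exact (hTdisj i').symm
        · rw [Fin.cons_succ, Fin.cons_succ]
          exact hW'disj i' j' (fun hc => hij (congrArg Fin.succ hc))
    · intro i
      rcases Fin.eq_zero_or_eq_succ i with rfl | ⟨i', rfl⟩
      · rw [Fin.cons_zero]; exact hTcard
      · rw [Fin.cons_succ]
        exact hW'card i'

end DRC

set_option maxHeartbeats 1000000 in
theorem dense_regular_cylinder_in_a_color (ε : ℝ) (hε0 : 0 < ε) (hε : ε < 1 / 2)
    (k : ℕ) (hk : 0 < k)
    (V : Type) [Fintype V] [DecidableEq V] (hV : 2 ^ (2 * k) ≤ Fintype.card V)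
    (R : SimpleGraph V) :
    ∃ G' : SimpleGraph V, (G' = R ∨ G' = Rᶜ) ∧
      ∃ P : Fin k → Finset V,
        (∀ i j, i ≠ j → Disjoint (P i) (P j)) ∧
        (∀ i j, (P i).card = (P j).card) ∧
        (∀ i j, i < j →
          EpsRegular G' ε (P i) (P j) ∧ 1 / 2 ≤ density G' (P i) (P j)) ∧
        ∀ i, (1 / (2 * (2 : ℝ) ^ (2 * k))) * ε ^ ((2 : ℝ) ^ (4 * k) * ε ^ (-5 : ℝ))
          * (Fintype.card V : ℝ) ≤ ((P i).card : ℝ) := by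
  classical
  obtain ⟨k', rfl⟩ : ∃ k', k = k' + 1 := ⟨k - 1, by omega⟩
  set n := Fintype.card V with hn
  set K := Nat.centralBinom k' with hKdef
  have hKpos : 0 < K := Nat.centralBinom_pos _
  have hKposR : (0:ℝ) < K := by exact_mod_cast hKpos
  have hK4 : K ≤ 4^k' := DRC.centralBinom_le_four_pow _
  have h4k : (4:ℕ)^(k'+1) = 2^(2*(k'+1)) := by
    rw [show (4:ℕ) = 2^2 by norm_num, ← pow_mul]
  have hKn : 4 * K ≤ n := by
    calc 4 * K ≤ 4 * 4^k' := Nat.mul_le_mul_left 4 hK4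
      _ = 4^(k'+1) := by rw [pow_succ]; ring
      _ = 2^(2*(k'+1)) := h4k
      _ ≤ n := hV
  have hε1 : ε ≤ 1 := by linarith
  have hε2 : 2 * ε ≤ 1 := by linarith
  set m₀ := n / K with hm₀def
  have hm₀pos : 0 < m₀ := Nat.div_pos (by omega) hKpos
  have hKm₀ : K * m₀ ≤ n := by
    rw [hm₀def, mul_comm]
    exact Nat.div_mul_le_self n K
  obtain ⟨W₀, hW₀sub, hW₀disj, hW₀card⟩ := DRC.partition_exists K m₀ (Finset.univ : Finset V)
    (by simpa using hKm₀)
  set N₀ := ⌈(2*(K:ℝ)^2/ε^4)⌉₊ with hN₀def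
  have hε4pos : (0:ℝ) < ε^4 := pow_pos hε0 4
  have hPhi₀ : (K:ℝ)^2 - N₀*(ε^4/2) ≤ DRC.Phi R W₀ := by
    have h1 : 2*(K:ℝ)^2/ε^4 ≤ N₀ := Nat.le_ceil _
    have h2 := DRC.Phi_nonneg R W₀
    have h3 : 2*(K:ℝ)^2 ≤ N₀ * ε^4 := by
      rw [div_le_iff₀ hε4pos] at h1
      linarith
    nlinarith
  obtain ⟨m', W', hm'pos, hW'sub, hW'card, hW'bound, hW'reg⟩ :=
    DRC.iterate R ε hε0 hε1 hKpos N₀ m₀ W₀ hm₀pos hW₀card hPhi₀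
  have hW'disj : ∀ i j, i ≠ j → Disjoint (W' i) (W' j) :=
    fun i j hij => (hW₀disj i j hij).mono (hW'sub i) (hW'sub j)
  have hW'ne : ∀ i, (W' i).Nonempty := fun i => Finset.card_pos.1 (by rw [hW'card]; exact hm'pos)
  -- numeric facts
  set η : ℝ := ε^4/(8*(K:ℝ)^2) with hηdef
  have hηpos : 0 < η := by positivity
  have hKsq : (K:ℝ)^2 * (3*k'+1) ≤ 16^k' := DRC.centralBinom_sq_bound k'
  have h3k1 : (1:ℝ) ≤ 3*k'+1 := by
    have : (0:ℝ) ≤ k' := by positivity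
    linarith
  have hKsq' : (K:ℝ)^2 ≤ 16^k' := by nlinarith [sq_nonneg (K:ℝ)]
  have h16pos : (0:ℝ) < 16^k' := by positivity
  -- η ≥ ε^(4k+3)  where 4k+3 = 4(k'+1)+3 = 4k'+7
  have hηeps : ε^(4*(k'+1)+3) ≤ η := by
    have h1 : ε^(4*(k'+1)+3) = ε^4 * ε^(4*k'+3) := by
      rw [← pow_add]
      congr 1
      ring
    have h2 : ε^(4*k'+3) ≤ (1/2:ℝ)^(4*k'+3) := by
      apply pow_le_pow_left₀ hε0.le
      linarith
    have h2pow16 : (2:ℝ)^(4*k') = 16^k' := by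
      rw [show (16:ℝ) = 2^4 by norm_num, ← pow_mul]
    have h3 : ((1:ℝ)/2)^(4*k'+3) = 1/(8 * 16^k') := by
      rw [div_pow, one_pow, show 4*k'+3 = 3 + 4*k' by ring, pow_add, h2pow16]
      norm_num
    have h4 : (1:ℝ)/(8*16^k') ≤ 1/(8*(K:ℝ)^2) := by
      apply div_le_div_of_nonneg_left (by norm_num) (by positivity)
      nlinarith
    rw [hηdef, h1]
    calc ε^4 * ε^(4*k'+3) ≤ ε^4 * (1/(8*(K:ℝ)^2)) := by
          apply mul_le_mul_of_nonneg_left _ hε4pos.le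
          calc ε^(4*k'+3) ≤ (1/2:ℝ)^(4*k'+3) := h2
            _ = 1/(8*16^k') := h3
            _ ≤ 1/(8*(K:ℝ)^2) := h4
      _ = ε^4 / (8*(K:ℝ)^2) := by ring
  -- exponent bound
  have hε5pos : (0:ℝ) < ε^5 := pow_pos hε0 5
  have hε5le : ε^5 ≤ (1/2:ℝ)^5 := pow_le_pow_left₀ hε0.le (by linarith) 5
  have hExpKey : ((4*(k'+1)+3) * N₀ : ℝ) * ε^5 ≤ 16 * 16^k' := by
    have hN₀lt : (N₀:ℝ) < 2*(K:ℝ)^2/ε^4 + 1 := Nat.ceil_lt_add_one (by positivity)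
    have hlin : ((4*(k'+1)+3 : ℕ) : ℝ) ≤ 2^(4*(k'+1)) := DRC.linear_le_pow (k'+1) (by omega)
    have h2pow : (2:ℝ)^(4*(k'+1)) = 16 * 16^k' := by
      rw [show 4*(k'+1) = 4 + 4*k' by ring, pow_add,
        show (16:ℝ) = 2^4 by norm_num, ← pow_mul]
    have hlin' : ((4*(k'+1)+3 : ℕ) : ℝ) ≤ 16 * 16^k' := by rw [← h2pow]; exact hlin
    have hcoef : (4*(k'+1)+3 : ℝ) ≤ 7*(3*k'+1) := by
      push_cast
      linarith [Nat.cast_nonneg (α := ℝ) k']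
    have hcoefpos : (0:ℝ) < 4*(k'+1)+3 := by positivity
    -- (4k'+7) * N₀ * ε^5 < (4k'+7) * (2K²/ε⁴ + 1) * ε^5 = (4k'+7)·2K²·ε + (4k'+7)·ε^5
    have step1 : ((4*(k'+1)+3) * N₀ : ℝ) * ε^5
        ≤ (4*(k'+1)+3 : ℝ) * (2*(K:ℝ)^2/ε^4 + 1) * ε^5 :=
      mul_le_mul_of_nonneg_right
        (mul_le_mul_of_nonneg_left hN₀lt.le (by positivity)) hε5pos.le
    have step2 : (4*(k'+1)+3 : ℝ) * (2*(K:ℝ)^2/ε^4 + 1) * ε^5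
        = (4*(k'+1)+3 : ℝ) * 2*(K:ℝ)^2 * ε + (4*(k'+1)+3 : ℝ) * ε^5 := by
      field_simp
    have step3 : (4*(k'+1)+3 : ℝ) * 2*(K:ℝ)^2 * ε ≤ 14 * 16^k' * ε := by
      have : (4*(k'+1)+3 : ℝ) * (K:ℝ)^2 ≤ 7 * 16^k' := by
        nlinarith [sq_nonneg (K:ℝ)]
      nlinarith [hε0]
    have step4 : (14 : ℝ) * 16^k' * ε ≤ 7 * 16^k' := by nlinarith
    have step5 : (4*(k'+1)+3 : ℝ) * ε^5 ≤ 16 * 16^k' * (1/32) := by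
      have h32 : ((1:ℝ)/2)^5 = 1/32 := by norm_num
      push_cast at hlin'
      nlinarith [hε5pos, hε5le, hcoefpos]
    calc ((4*(k'+1)+3) * N₀ : ℝ) * ε^5
        ≤ (4*(k'+1)+3 : ℝ) * (2*(K:ℝ)^2/ε^4 + 1) * ε^5 := step1
      _ = (4*(k'+1)+3 : ℝ) * 2*(K:ℝ)^2 * ε + (4*(k'+1)+3 : ℝ) * ε^5 := step2
      _ ≤ 7 * 16^k' + 16 * 16^k' * (1/32) := by linarith [step3.trans step4, step5]
      _ ≤ 16 * 16^k' := by nlinarith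
  -- the rpow comparison
  have hEeq : (2:ℝ)^(4*(k'+1)) * ε^(-5:ℝ) = 2^(4*(k'+1)) / ε^5 := by
    rw [show (-5:ℝ) = -((5:ℕ):ℝ) by norm_num, Real.rpow_neg hε0.le, Real.rpow_natCast]
    ring
  have hExp : (((4*(k'+1)+3) * N₀ : ℕ) : ℝ) ≤ (2:ℝ)^(4*(k'+1)) * ε^(-5:ℝ) := by
    rw [hEeq]
    rw [le_div_iff₀ hε5pos]
    have h2pow : (2:ℝ)^(4*(k'+1)) = 16 * 16^k' := by
      rw [show 4*(k'+1) = 4 + 4*k' by ring, pow_add,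
        show (16:ℝ) = 2^4 by norm_num, ← pow_mul]
    rw [h2pow]
    push_cast
    push_cast at hExpKey
    linarith
  have hrpow : ε ^ ((2:ℝ)^(4*(k'+1)) * ε^(-5:ℝ)) ≤ η^N₀ := by
    calc ε ^ ((2:ℝ)^(4*(k'+1)) * ε^(-5:ℝ))
        ≤ ε ^ ((((4*(k'+1)+3) * N₀ : ℕ) : ℝ)) :=
          Real.rpow_le_rpow_of_exponent_ge hε0 hε1 hExp
      _ = ε ^ ((4*(k'+1)+3) * N₀ : ℕ) := Real.rpow_natCast ε _
      _ = (ε ^ (4*(k'+1)+3))^N₀ := by rw [pow_mul]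
      _ ≤ η^N₀ := pow_le_pow_left₀ (by positivity) hηeps N₀
  -- m₀ vs n
  have hnR : (0:ℝ) < n := by
    have : 0 < n := by omega
    exact_mod_cast this
  have hm₀R : (n:ℝ)/(2*K) ≤ m₀ := by
    have hdm := Nat.div_add_mod n K
    have hmod : n % K < K := Nat.mod_lt n hKpos
    have h1 : (n:ℝ) < K*m₀ + K := by
      have hnat : n < K * m₀ + K := by
        rw [hm₀def]
        omega
      exact_mod_cast hnat
    have h2 : (1:ℝ) ≤ m₀ := by exact_mod_cast hm₀pos
    rw [div_le_iff₀ (by positivity)]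
    nlinarith
  have hKle2 : (K:ℝ) ≤ (2:ℝ)^(2*(k'+1)) := by
    have h1 : (K:ℝ) ≤ 4^k' := by exact_mod_cast hK4
    have h2 : (4:ℝ)^k' ≤ 4^(k'+1) := by
      apply pow_le_pow_right₀ (by norm_num)
      omega
    have h3 : (4:ℝ)^(k'+1) = 2^(2*(k'+1)) := by
      rw [show (4:ℝ) = 2^2 by norm_num, ← pow_mul]
    linarith
  -- final size bound for any set of card m'
  have hsize : (1 / (2 * (2:ℝ)^(2*(k'+1)))) * ε ^ ((2:ℝ)^(4*(k'+1)) * ε^(-5:ℝ)) * n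
      ≤ (m' : ℝ) := by
    have hEpos : (0:ℝ) < ε ^ ((2:ℝ)^(4*(k'+1)) * ε^(-5:ℝ)) := Real.rpow_pos_of_pos hε0 _
    calc (1 / (2 * (2:ℝ)^(2*(k'+1)))) * ε ^ ((2:ℝ)^(4*(k'+1)) * ε^(-5:ℝ)) * n
        ≤ (1 / (2 * (2:ℝ)^(2*(k'+1)))) * η^N₀ * n := by
          apply mul_le_mul_of_nonneg_right _ hnR.le
          apply mul_le_mul_of_nonneg_left hrpow (by positivity)
      _ ≤ (1 / (2*(K:ℝ))) * η^N₀ * n := by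
          apply mul_le_mul_of_nonneg_right _ hnR.le
          apply mul_le_mul_of_nonneg_right _ (by positivity)
          apply div_le_div_of_nonneg_left (by norm_num) (by positivity)
          nlinarith
      _ = η^N₀ * ((n:ℝ)/(2*K)) := by ring
      _ ≤ η^N₀ * m₀ := by
          apply mul_le_mul_of_nonneg_left hm₀R (by positivity)
      _ ≤ (m' : ℝ) := hW'bound
  -- Ramsey on the K sets
  set f : Fin K → Fin K → Prop := fun i j => 1/2 ≤ density R (W' i) (W' j) with hfdef
  have hsym : ∀ x y, f x y → f y x := by
    intro x y h
    rw [hfdef]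
    dsimp only
    rw [DRC.density_comm]
    exact h
  have hcardS : (k' + k').choose k' ≤ (Finset.univ : Finset (Fin K)).card := by
    rw [Finset.card_univ, Fintype.card_fin]
    apply le_of_eq
    rw [hKdef, Nat.centralBinom_eq_two_mul_choose]
    congr 1
    ring
  obtain ⟨T, hTsub, hTcase⟩ := DRC.ramsey f hsym (k' + k') k' k' rfl Finset.univ hcardS
  -- common construction
  have build : ∀ G' : SimpleGraph V, (G' = R ∨ G' = Rᶜ) →
      (∀ i ∈ T, ∀ j ∈ T, i ≠ j →
        EpsRegular G' ε (W' i) (W' j) ∧ 1/2 ≤ density G' (W' i) (W' j)) →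
      (k'+1) ≤ T.card →
      ∃ P : Fin (k'+1) → Finset V,
        (∀ i j, i ≠ j → Disjoint (P i) (P j)) ∧
        (∀ i j, (P i).card = (P j).card) ∧
        (∀ i j, i < j →
          EpsRegular G' ε (P i) (P j) ∧ 1 / 2 ≤ density G' (P i) (P j)) ∧
        ∀ i, (1 / (2 * (2 : ℝ) ^ (2 * (k'+1)))) * ε ^ ((2 : ℝ) ^ (4 * (k'+1)) * ε ^ (-5 : ℝ))
          * (n : ℝ) ≤ ((P i).card : ℝ) := by
    intro G' hG' hpairs hTcard
    obtain ⟨T', hT'sub, hT'card⟩ := Finset.exists_subset_card_eq hTcard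
    set e := T'.orderIsoOfFin hT'card with hedef
    set P : Fin (k'+1) → Finset V := fun i => W' ((e i) : Fin K) with hPdef
    have hinj : ∀ i j : Fin (k'+1), i ≠ j → ((e i) : Fin K) ≠ ((e j) : Fin K) := by
      intro i j hij hc
      exact hij (e.injective (Subtype.ext hc))
    have hmemT : ∀ i : Fin (k'+1), ((e i) : Fin K) ∈ T := fun i => hT'sub (e i).2
    refine ⟨P, ?_, ?_, ?_, ?_⟩
    · intro i j hij
      exact hW'disj _ _ (hinj i j hij)
    · intro i j
      rw [hPdef]
      dsimp only
      rw [hW'card, hW'card]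
    · intro i j hij
      exact hpairs _ (hmemT i) _ (hmemT j) (hinj i j (ne_of_lt hij))
    · intro i
      rw [hPdef]
      dsimp only
      rw [hW'card]
      exact hsize
  rcases hTcase with ⟨hTcard, hTred⟩ | ⟨hTcard, hTblue⟩
  · exact ⟨R, Or.inl rfl, build R (Or.inl rfl) (fun i hi j hj hij =>
      ⟨hW'reg i j hij, hTred i hi j hj hij⟩) hTcard⟩
  · refine ⟨Rᶜ, Or.inr rfl, build Rᶜ (Or.inr rfl) (fun i hi j hj hij => ?_) hTcard⟩
    constructor
    · exact DRC.EpsRegular_compl hε0 R (hW'disj i j hij) (hW'reg i j hij)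
    · rw [DRC.density_compl R (hW'disj i j hij) (hW'ne i) (hW'ne j)]
      have hlt := hTblue i hi j hj hij
      rw [hfdef] at hlt
      push_neg at hlt
      linarith
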